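/- For a DAG on n vertices with a q-labeling (each vertex independently ranked with probability q, ranks a uniformly random permutation of the ranked vertices), and any c ≥ 3: with probability at least 1 − 1/n^{c−2}, for every vertex v the number of unranked predecessors u of v with ℓ(u) = ℓ(v) is at most c·log(n)/q. -/

import Mathlib

open Classical Finset
open scoped Classical

noncomputable section

variable {V : Type*}

/-- Reachability: `reach adj u v` iff there is a directed path from `u` to `v`
(including the trivial path, so `reach adj v v` always holds). -/
def reach (adj : V → V → Prop) : V → V → Prop := Relation.ReflTransGen adj

/-- The graph has no (nontrivial) directed cycle. -/
def IsAcyclic (adj : V → V → Prop) : Prop := ∀ x, ¬ Relation.TransGen adj x x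

/-- `P(v)`: the set of predecessors of `v` (vertices with a path to `v`, including `v`). -/
def predSet [Fintype V] (adj : V → V → Prop) (v : V) : Finset V :=
  Finset.univ.filter fun u => reach adj u v

/-- `S(v)`: the set of successors of `v` (vertices reachable from `v`, including `v`). -/
def succSet [Fintype V] (adj : V → V → Prop) (v : V) : Finset V :=
  Finset.univ.filter fun u => reach adj v u

/-- The element of `A` of minimum rank (an arbitrary vertex if `A = ∅`). -/
def argminR [Nonempty V] (r : V → ℕ∞) (A : Finset V) : V :=
  if h : A.Nonempty then (Finset.exists_min_image A r h).choose else Classical.arbitrary V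

/-- The sets `A_{i+1}(v)` (0-indexed: `Aset adj L r v i` is the paper's `A_{i+1}(v)`):
`A_1(v) = P(v) ∩ L`, and `A_{i+1}(v) = (S(ℓ_i(v)) ∩ P(v) ∩ L) \ {ℓ_i(v)}` where
`ℓ_i(v)` is the minimum-rank element of `A_i(v)`. -/
def Aset [Fintype V] [Nonempty V] (adj : V → V → Prop) (L : Finset V) (r : V → ℕ∞)
    (v : V) : ℕ → Finset V
  | 0 => predSet adj v ∩ L
  | i + 1 =>
    if (Aset adj L r v i).Nonempty then
      (succSet adj (argminR r (Aset adj L r v i)) ∩ predSet adj v ∩ L).erase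
        (argminR r (Aset adj L r v i))
    else ∅

/-- `ℓ_{i+1}(v)` (0-indexed). -/
def labVertex [Fintype V] [Nonempty V] (adj : V → V → Prop) (L : Finset V) (r : V → ℕ∞)
    (v : V) (i : ℕ) : V := argminR r (Aset adj L r v i)

/-- `k(v)`: the number of indices `i` with `A_{i+1}(v) ≠ ∅` (in a DAG the sets shrink,
so this is the largest `i` with `A_i(v) ≠ ∅`, in the paper's 1-indexed convention). -/
def kOf [Fintype V] [Nonempty V] (adj : V → V → Prop) (L : Finset V) (r : V → ℕ∞) (v : V) : ℕ :=
  ((Finset.range (Fintype.card V + 1)).filter fun i => (Aset adj L r v i).Nonempty).card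

/-- The label `ℓ(v) = (ℓ_1(v), …, ℓ_{k(v)}(v))`. -/
def labelSeq [Fintype V] [Nonempty V] (adj : V → V → Prop) (L : Finset V) (r : V → ℕ∞)
    (v : V) : List V :=
  (List.range (kOf adj L r v)).map (labVertex adj L r v)

/-- The rank sequence `r(ℓ(v))` with `+∞` appended. -/
def rankSeq [Fintype V] [Nonempty V] (adj : V → V → Prop) (L : Finset V) (r : V → ℕ∞)
    (v : V) : List ℕ∞ :=
  ((labelSeq adj L r v).map r) ++ [⊤]

/-- `ℓ(u) ≺ ℓ(v)`: decreasing lexicographic order on the rank sequences with `+∞` appended. -/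
def labLt [Fintype V] [Nonempty V] (adj : V → V → Prop) (L : Finset V) (r : V → ℕ∞)
    (u v : V) : Prop :=
  List.Lex (· < ·) (rankSeq adj L r v) (rankSeq adj L r u)


open MeasureTheory
open scoped ENNReal

instance instMeasurableSpaceEquivFin (V : Type*) [Fintype V] :
    MeasurableSpace (V ≃ Fin (Fintype.card V)) := ⊤

instance instNonemptyEquivFin (V : Type*) [Fintype V] :
    Nonempty (V ≃ Fin (Fintype.card V)) := ⟨Fintype.equivFin V⟩

set_option linter.unusedSectionVars false

section Det

variable [Fintype V] [Nonempty V]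
variable (adj : V → V → Prop) (L : Finset V) (r : V → ℕ∞)

lemma reach_trans {u v w : V} (h1 : reach adj u v) (h2 : reach adj v w) : reach adj u w :=
  Relation.ReflTransGen.trans h1 h2

lemma reach_antisymm (hacyc : IsAcyclic adj) {u v : V}
    (huv : reach adj u v) (hvu : reach adj v u) : u = v := by
  by_contra hne
  rcases Relation.reflTransGen_iff_eq_or_transGen.mp (show Relation.ReflTransGen adj u v from huv)
    with rfl | h
  · exact hne rfl
  · exact hacyc u (h.trans_left hvu)

lemma argminR_mem {A : Finset V} (h : A.Nonempty) : argminR r A ∈ A := by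
  rw [argminR, dif_pos h]
  exact (Finset.exists_min_image A r h).choose_spec.1

lemma mem_predSet {u v : V} : u ∈ predSet adj v ↔ reach adj u v := by
  simp [predSet]

lemma mem_succSet {u v : V} : u ∈ succSet adj v ↔ reach adj v u := by
  simp [succSet]

lemma Aset_subset (v : V) : ∀ i, Aset adj L r v i ⊆ predSet adj v ∩ L
  | 0 => by rw [Aset]
  | i + 1 => by
      rw [Aset]
      split
      · intro x hx
        simp only [Finset.mem_erase, Finset.mem_inter] at hx ⊢
        exact ⟨hx.2.1.2, hx.2.2⟩
      · simp

lemma Aset_empty_succ {v : V} {i : ℕ} (h : Aset adj L r v i = ∅) :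
    Aset adj L r v (i + 1) = ∅ := by
  rw [Aset, if_neg (by simp [h])]

lemma Aset_nonempty_of_succ {v : V} {i : ℕ} (h : (Aset adj L r v (i+1)).Nonempty) :
    (Aset adj L r v i).Nonempty := by
  by_contra hne
  rw [Finset.not_nonempty_iff_eq_empty] at hne
  rw [Aset_empty_succ adj L r hne] at h
  exact h.ne_empty rfl

lemma mem_Aset_succ {v : V} {i : ℕ} (h : (Aset adj L r v i).Nonempty) {x : V} :
    x ∈ Aset adj L r v (i+1) ↔
      (x ≠ argminR r (Aset adj L r v i) ∧ reach adj (argminR r (Aset adj L r v i)) x ∧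
        reach adj x v ∧ x ∈ L) := by
  rw [Aset, if_pos h]
  simp only [Finset.mem_erase, Finset.mem_inter, mem_succSet, mem_predSet]
  tauto

lemma Aset_succ_subset (hacyc : IsAcyclic adj) (v : V) (i : ℕ) :
    Aset adj L r v (i+1) ⊆ (Aset adj L r v i).erase (argminR r (Aset adj L r v i)) := by
  by_cases h : (Aset adj L r v i).Nonempty
  · intro x hx
    obtain ⟨hxw, hwx, hxv, hxL⟩ := (mem_Aset_succ adj L r h).mp hx
    refine Finset.mem_erase.mpr ⟨hxw, ?_⟩
    cases i with
    | zero =>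
      rw [Aset]
      exact Finset.mem_inter.mpr ⟨(mem_predSet adj).mpr hxv, hxL⟩
    | succ j =>
      have hj : (Aset adj L r v j).Nonempty := Aset_nonempty_of_succ adj L r h
      have hwmem := argminR_mem r h
      obtain ⟨hww', hw'w, _, _⟩ := (mem_Aset_succ adj L r hj).mp hwmem
      refine (mem_Aset_succ adj L r hj).mpr ⟨?_, reach_trans adj hw'w hwx, hxv, hxL⟩
      rintro rfl
      exact hww' (reach_antisymm adj hacyc hwx hw'w)
  · rw [Finset.not_nonempty_iff_eq_empty] at h
    rw [Aset_empty_succ adj L r h]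
    simp

lemma Aset_card_add (hacyc : IsAcyclic adj) (v : V) :
    ∀ i, (Aset adj L r v i).Nonempty → (Aset adj L r v i).card + i ≤ (Aset adj L r v 0).card
  | 0, _ => by simp
  | i + 1, h => by
      have hi : (Aset adj L r v i).Nonempty := Aset_nonempty_of_succ adj L r h
      have h1 : (Aset adj L r v (i+1)).card ≤
          ((Aset adj L r v i).erase (argminR r (Aset adj L r v i))).card :=
        Finset.card_le_card (Aset_succ_subset adj L r hacyc v i)
      have h2 := Finset.card_erase_of_mem (argminR_mem r hi)
      have h3 := Aset_card_add hacyc v i hi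
      have h4 : 1 ≤ (Aset adj L r v i).card := Finset.card_pos.mpr hi
      omega

lemma Aset_card_V_empty (hacyc : IsAcyclic adj) (v : V) :
    Aset adj L r v (Fintype.card V) = ∅ := by
  by_contra h
  rw [← Finset.not_nonempty_iff_eq_empty, not_not] at h
  have h1 := Aset_card_add adj L r hacyc v _ h
  have h2 : 1 ≤ (Aset adj L r v (Fintype.card V)).card := Finset.card_pos.mpr h
  have h3 : (Aset adj L r v 0).card ≤ Fintype.card V := Finset.card_le_univ _
  omega

lemma Aset_empty_of_le {v : V} {i j : ℕ} (hij : i ≤ j) (h : Aset adj L r v i = ∅) :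
    Aset adj L r v j = ∅ := by
  induction j with
  | zero => exact (Nat.le_zero.mp hij) ▸ h
  | succ n ih =>
    by_cases hij' : i ≤ n
    · exact Aset_empty_succ adj L r (ih hij')
    · have : i = n + 1 := by omega
      exact this ▸ h

/-- A downward closed finset of naturals is a range. -/
lemma downward_closed_eq_range (F : Finset ℕ) (h : ∀ i j : ℕ, j ≤ i → i ∈ F → j ∈ F) :
    F = Finset.range F.card := by
  rcases F.eq_empty_or_nonempty with rfl | hne
  · simp
  · have hF : F = Finset.range (F.max' hne + 1) := by
      ext i
      simp only [Finset.mem_range, Nat.lt_succ_iff]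
      exact ⟨fun hi => Finset.le_max' F i hi, fun hi => h _ _ hi (F.max'_mem hne)⟩
    have hc : F.card = F.max' hne + 1 := by
      conv_lhs => rw [hF]
      rw [Finset.card_range]
    rw [hc, ← hF]

lemma Aset_nonempty_iff (hacyc : IsAcyclic adj) (v : V) (i : ℕ) :
    (Aset adj L r v i).Nonempty ↔ i < kOf adj L r v := by
  classical
  have hdc : ∀ a b : ℕ, b ≤ a →
      a ∈ ((Finset.range (Fintype.card V + 1)).filter
        fun i => (Aset adj L r v i).Nonempty) →
      b ∈ ((Finset.range (Fintype.card V + 1)).filter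
        fun i => (Aset adj L r v i).Nonempty) := by
    intro a b hba ha
    simp only [Finset.mem_filter, Finset.mem_range] at ha ⊢
    refine ⟨lt_of_le_of_lt (Nat.lt_succ_iff.mp (lt_of_le_of_lt hba ha.1)) (Nat.lt_succ_self _), ?_⟩
    by_contra hb
    rw [Finset.not_nonempty_iff_eq_empty] at hb
    exact ha.2.ne_empty (Aset_empty_of_le adj L r hba hb)
  have hrange := downward_closed_eq_range _ hdc
  rw [kOf]
  constructor
  · intro hne
    have hi : i ≤ Fintype.card V := by
      by_contra hgt
      push_neg at hgt
      exact hne.ne_empty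
        (Aset_empty_of_le adj L r (le_of_lt hgt) (Aset_card_V_empty adj L r hacyc v))
    have : i ∈ (Finset.range (Fintype.card V + 1)).filter
        fun i => (Aset adj L r v i).Nonempty := by
      simp only [Finset.mem_filter, Finset.mem_range]
      exact ⟨Nat.lt_succ_of_le hi, hne⟩
    rw [hrange] at this
    exact Finset.mem_range.mp this
  · intro hlt
    have : i ∈ (Finset.range (Fintype.card V + 1)).filter
        fun i => (Aset adj L r v i).Nonempty := by
      rw [hrange]; exact Finset.mem_range.mpr hlt
    exact (Finset.mem_filter.mp this).2

lemma kOf_le_card (hacyc : IsAcyclic adj) (v : V) : kOf adj L r v ≤ Fintype.card V := by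
  by_contra h
  push_neg at h
  have := (Aset_nonempty_iff adj L r hacyc v (Fintype.card V)).mpr h
  exact this.ne_empty (Aset_card_V_empty adj L r hacyc v)

lemma Aset_kOf_empty (hacyc : IsAcyclic adj) (v : V) :
    Aset adj L r v (kOf adj L r v) = ∅ := by
  by_contra h
  rw [← Finset.not_nonempty_iff_eq_empty, not_not] at h
  exact lt_irrefl _ ((Aset_nonempty_iff adj L r hacyc v _).mp h)

end Det

section Det2
variable [Fintype V] [Nonempty V]
variable (adj : V → V → Prop) (L : Finset V) (r : V → ℕ∞)

lemma notin_L_of_kOf_zero (hacyc : IsAcyclic adj) {v : V} (h : kOf adj L r v = 0)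
    {x : V} (hx : reach adj x v) : x ∉ L := by
  intro hxL
  have h0 : (Aset adj L r v 0).Nonempty :=
    ⟨x, by rw [Aset]; exact Finset.mem_inter.mpr ⟨(mem_predSet adj).mpr hx, hxL⟩⟩
  rw [Aset_nonempty_iff adj L r hacyc, h] at h0
  omega

lemma labVertex_eq_of_labelSeq_eq (hacyc : IsAcyclic adj) {u v : V} {m : ℕ}
    (hk : kOf adj L r v = m + 1)
    (hlab : labelSeq adj L r u = labelSeq adj L r v) :
    kOf adj L r u = m + 1 ∧ labVertex adj L r u m = labVertex adj L r v m := by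
  have hlen := congrArg List.length hlab
  simp only [labelSeq, List.length_map, List.length_range] at hlen
  rw [hk] at hlen
  refine ⟨hlen, ?_⟩
  have h1 : (labelSeq adj L r u)[m]? = (labelSeq adj L r v)[m]? := by rw [hlab]
  simp only [labelSeq, List.getElem?_map, List.getElem?_range] at h1
  rw [hlen, hk] at h1
  simpa using h1

lemma reach_label_last (hacyc : IsAcyclic adj) {u v : V} {m : ℕ}
    (hu : u ∉ L) (hk : kOf adj L r v = m + 1)
    (hlab : labelSeq adj L r u = labelSeq adj L r v) :
    reach adj (labVertex adj L r v m) u ∧ u ≠ labVertex adj L r v m := by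
  obtain ⟨hku, heq⟩ := labVertex_eq_of_labelSeq_eq adj L r hacyc hk hlab
  have hne : (Aset adj L r u m).Nonempty := by
    rw [Aset_nonempty_iff adj L r hacyc, hku]; omega
  have hmem : labVertex adj L r u m ∈ Aset adj L r u m := argminR_mem r hne
  have hsub := Aset_subset adj L r u m hmem
  rw [Finset.mem_inter, mem_predSet] at hsub
  rw [← heq]
  exact ⟨hsub.1, fun h => hu (h ▸ hsub.2)⟩

lemma notin_L_of_D (hacyc : IsAcyclic adj) {v : V} {m : ℕ}
    (hk : kOf adj L r v = m + 1) {x : V}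
    (hxw : x ≠ labVertex adj L r v m) (hwx : reach adj (labVertex adj L r v m) x)
    (hxv : reach adj x v) : x ∉ L := by
  intro hxL
  have hne : (Aset adj L r v m).Nonempty := by
    rw [Aset_nonempty_iff adj L r hacyc, hk]; omega
  have hx : x ∈ Aset adj L r v (m+1) :=
    (mem_Aset_succ adj L r hne).mpr ⟨hxw, hwx, hxv, hxL⟩
  rw [← hk] at hx
  rw [Aset_kOf_empty adj L r hacyc v] at hx
  exact absurd hx (Finset.notMem_empty x)

end Det2

/-- Lemma 3 of the paper: for a `q`-labeling of an `n`-vertex DAG (each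
vertex independently ranked with probability `q`, with a uniformly random relative order
of the ranks, modeled by a uniformly random bijection `V ≃ Fin n` inducing the order),
and any `c ≥ 3`, with probability at least `1 − 1/n^{c−2}` every vertex `v` has at most
`c·log(n)/q` unranked predecessors `u` with `ℓ(u) = ℓ(v)`. -/
theorem q_labeling_few_same_label_predecessors
    [Fintype V] [DecidableEq V] [Nonempty V]
    (adj : V → V → Prop) (hacyc : IsAcyclic adj)
    (q : ℝ≥0∞) (hq1 : q ≤ 1) (hq0 : 0 < q) (c : ℝ) (hc : 3 ≤ c)
    (P : Measure ((V → Bool) × (V ≃ Fin (Fintype.card V))))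
    (hP : P = (Measure.pi fun _ : V => (PMF.bernoulli q.toNNReal (by simpa using ENNReal.toNNReal_mono ENNReal.one_ne_top hq1)).toMeasure).prod
      (PMF.uniformOfFintype (V ≃ Fin (Fintype.card V))).toMeasure)
    (Lset : (V → Bool) × (V ≃ Fin (Fintype.card V)) → Finset V)
    (hLset : ∀ ω, Lset ω = Finset.univ.filter fun w => ω.1 w = true)
    (rk : (V → Bool) × (V ≃ Fin (Fintype.card V)) → V → ℕ∞)
    (hrk : ∀ ω w, rk ω w =
      if ω.1 w = true then
        (((Finset.univ.filter fun u => ω.1 u = true ∧ ω.2 u < ω.2 w).card + 1 : ℕ) : ℕ∞)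
      else ⊤) :
    ENNReal.ofReal (1 - 1 / (Fintype.card V : ℝ) ^ (c - 2)) ≤
      P {ω | ∀ v : V,
        ((Finset.univ.filter fun u =>
            ω.1 u = false ∧ reach adj u v ∧
            labelSeq adj (Lset ω) (rk ω) u = labelSeq adj (Lset ω) (rk ω) v).card : ℝ) ≤
          c * Real.log (Fintype.card V) / q.toReal} := by
  have hn1 : 1 ≤ Fintype.card V := Fintype.card_pos
  have hqtop : q ≠ ⊤ := (lt_of_le_of_lt hq1 (by norm_num)).ne
  set qr := q.toReal with hqr
  have hqr0 : 0 < qr := ENNReal.toReal_pos hq0.ne' hqtop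
  have hqr1 : qr ≤ 1 := by
    rw [hqr, ← ENNReal.toReal_one]
    exact ENNReal.toReal_mono (by norm_num) hq1
  set t := c * Real.log (Fintype.card V) / qr with htdef
  have ht0 : 0 ≤ t := by
    apply div_nonneg _ hqr0.le
    apply mul_nonneg (by linarith)
    exact Real.log_nonneg (by exact_mod_cast hn1)
  -- measurability: every subset of Ω is measurable
  have hmeas : ∀ s : Set ((V → Bool) × (V ≃ Fin (Fintype.card V))), MeasurableSet s := by
    intro s
    haveI : MeasurableSingletonClass (V ≃ Fin (Fintype.card V)) :=
      ⟨fun _ => MeasurableSpace.measurableSet_top⟩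
    exact s.to_countable.measurableSet
  haveI hPprob : IsProbabilityMeasure P := by
    rw [hP]
    infer_instance
  -- probability of a cylinder event
  have hEv : ∀ S : Finset V,
      P {ω : (V → Bool) × (V ≃ Fin (Fintype.card V)) | ∀ x ∈ S, ω.1 x = false}
        = (1 - q) ^ S.card := by
    intro S
    have hset : {ω : (V → Bool) × (V ≃ Fin (Fintype.card V)) | ∀ x ∈ S, ω.1 x = false} =
        (Set.univ.pi fun x : V => if x ∈ S then ({false} : Set Bool) else Set.univ) ×ˢ
          Set.univ := by
      ext ω
      simp only [Set.mem_setOf_eq, Set.mem_prod, Set.mem_univ, and_true, Set.mem_pi, true_implies]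
      constructor
      · intro h x
        by_cases hx : x ∈ S
        · simp [hx, h x hx]
        · simp [hx]
      · intro h x hx
        have := h x
        rw [if_pos hx] at this
        exact this
    rw [hP, hset, Measure.prod_prod, measure_univ, mul_one, Measure.pi_pi]
    have hb : ∀ x : V,
        (PMF.bernoulli q.toNNReal (by simpa using ENNReal.toNNReal_mono ENNReal.one_ne_top hq1)).toMeasure (if x ∈ S then ({false} : Set Bool) else Set.univ)
          = if x ∈ S then 1 - q else 1 := by
      intro x
      split
      · rw [PMF.toMeasure_apply_singleton _ _ (measurableSet_singleton _)]
        change ((1 - q.toNNReal : NNReal) : ℝ≥0∞) = 1 - q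
        rw [ENNReal.coe_sub, ENNReal.coe_one, ENNReal.coe_toNNReal hqtop]
      · exact measure_univ
    rw [Finset.prod_congr rfl (fun x _ => hb x), Finset.prod_ite_mem, Finset.univ_inter,
      Finset.prod_const]
  -- per-event bound
  set M := ENNReal.ofReal (Real.exp (-(qr * t))) with hM
  have hMb : ∀ S : Finset V, t ≤ (S.card : ℝ) →
      P {ω : (V → Bool) × (V ≃ Fin (Fintype.card V)) | ∀ x ∈ S, ω.1 x = false} ≤ M := by
    intro S hS
    rw [hEv S]
    have h1q : (1 - q : ℝ≥0∞) = ENNReal.ofReal (1 - qr) := by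
      rw [ENNReal.ofReal_sub _ ENNReal.toReal_nonneg, ENNReal.ofReal_one,
        ENNReal.ofReal_toReal hqtop]
    rw [h1q, ← ENNReal.ofReal_pow (by linarith)]
    apply ENNReal.ofReal_le_ofReal
    calc (1 - qr) ^ S.card ≤ Real.exp (-qr) ^ S.card := by
          apply pow_le_pow_left₀ (by linarith)
          linarith [Real.add_one_le_exp (-qr)]
      _ = Real.exp (-(qr * S.card)) := by
          rw [← Real.exp_nat_mul]
          ring_nf
      _ ≤ Real.exp (-(qr * t)) := by
          apply Real.exp_le_exp.mpr
          have : qr * t ≤ qr * S.card := by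
            apply mul_le_mul_of_nonneg_left hS hqr0.le
          linarith
  -- the union bound covering
  set DA : V → V → Finset V := fun w v => (succSet adj w ∩ predSet adj v).erase w with hDA
  set good := {ω : (V → Bool) × (V ≃ Fin (Fintype.card V)) | ∀ v : V,
        ((Finset.univ.filter fun u =>
            ω.1 u = false ∧ reach adj u v ∧
            labelSeq adj (Lset ω) (rk ω) u = labelSeq adj (Lset ω) (rk ω) v).card : ℝ) ≤
          t} with hgood
  have hcover : goodᶜ ⊆
      (⋃ (v : V) (_ : t < ((predSet adj v).card : ℝ)),
        {ω : (V → Bool) × (V ≃ Fin (Fintype.card V)) | ∀ x ∈ predSet adj v, ω.1 x = false}) ∪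
      (⋃ (p : V × V) (_ : t < ((DA p.1 p.2).card : ℝ)),
        {ω : (V → Bool) × (V ≃ Fin (Fintype.card V)) | ∀ x ∈ DA p.1 p.2, ω.1 x = false}) := by
    intro ω hω
    rw [hgood, Set.mem_compl_iff, Set.mem_setOf_eq] at hω
    push_neg at hω
    obtain ⟨v, hv⟩ := hω
    have hLmem : ∀ x : V, x ∉ Lset ω ↔ ω.1 x = false := by
      intro x
      rw [hLset ω]
      simp [Finset.mem_filter]
    set C := Finset.univ.filter fun u =>
        ω.1 u = false ∧ reach adj u v ∧
          labelSeq adj (Lset ω) (rk ω) u = labelSeq adj (Lset ω) (rk ω) v with hC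
    rcases Nat.eq_zero_or_eq_succ_pred (kOf adj (Lset ω) (rk ω) v) with hk | hk
    · -- empty label case
      left
      have hCsub : C ⊆ predSet adj v := by
        intro u hu
        rw [hC, Finset.mem_filter] at hu
        exact (mem_predSet adj).mpr hu.2.2.1
      refine Set.mem_iUnion.mpr ⟨v, Set.mem_iUnion.mpr ⟨?_, ?_⟩⟩
      · calc t < (C.card : ℝ) := hv
          _ ≤ ((predSet adj v).card : ℝ) := by exact_mod_cast Finset.card_le_card hCsub
      · intro x hx
        rw [← hLmem]
        exact notin_L_of_kOf_zero adj (Lset ω) (rk ω) hacyc hk ((mem_predSet adj).mp hx)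
    · -- nonempty label case
      right
      set m := (kOf adj (Lset ω) (rk ω) v) - 1 with hm
      rw [Nat.succ_eq_add_one] at hk
      set w := labVertex adj (Lset ω) (rk ω) v m with hw
      have hCsub : C ⊆ DA w v := by
        intro u hu
        rw [hC, Finset.mem_filter] at hu
        obtain ⟨_, hfalse, hreach, hlab⟩ := hu
        have huL : u ∉ Lset ω := (hLmem u).mpr hfalse
        obtain ⟨hwu, hune⟩ := reach_label_last adj (Lset ω) (rk ω) hacyc huL hk hlab
        rw [hDA]
        exact Finset.mem_erase.mpr ⟨hune, Finset.mem_inter.mpr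
          ⟨(mem_succSet adj).mpr hwu, (mem_predSet adj).mpr hreach⟩⟩
      refine Set.mem_iUnion.mpr ⟨(w, v), Set.mem_iUnion.mpr ⟨?_, ?_⟩⟩
      · calc t < (C.card : ℝ) := hv
          _ ≤ ((DA w v).card : ℝ) := by exact_mod_cast Finset.card_le_card hCsub
      · intro x hx
        rw [hDA] at hx
        simp only [Finset.mem_erase, Finset.mem_inter, mem_succSet, mem_predSet] at hx
        obtain ⟨hxw, hwx, hxv⟩ := hx
        rw [← hLmem]
        exact notin_L_of_D adj (Lset ω) (rk ω) hacyc hk hxw hwx hxv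
  -- bound the bad probability
  have hbad : P goodᶜ ≤ ENNReal.ofReal (1 / (Fintype.card V : ℝ) ^ (c - 2)) := by
    have hU1 : P (⋃ (v : V) (_ : t < ((predSet adj v).card : ℝ)),
        {ω : (V → Bool) × (V ≃ Fin (Fintype.card V)) | ∀ x ∈ predSet adj v, ω.1 x = false}) ≤
        (Fintype.card V : ℝ≥0∞) * M := by
      refine le_trans (measure_iUnion_le _) ?_
      rw [tsum_fintype]
      have hterm : ∀ v : V, P (⋃ (_ : t < ((predSet adj v).card : ℝ)),
          {ω : (V → Bool) × (V ≃ Fin (Fintype.card V)) | ∀ x ∈ predSet adj v, ω.1 x = false})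
          ≤ M := by
        intro v
        by_cases hcond : t < ((predSet adj v).card : ℝ)
        · refine le_trans (measure_mono (Set.iUnion_subset fun _ => subset_rfl)) ?_
          exact hMb _ hcond.le
        · rw [Set.iUnion_eq_empty.mpr fun h => absurd h hcond]
          simp
      calc ∑ v : V, P (⋃ (_ : t < ((predSet adj v).card : ℝ)),
            {ω : (V → Bool) × (V ≃ Fin (Fintype.card V)) | ∀ x ∈ predSet adj v, ω.1 x = false})
          ≤ ∑ _v : V, M := Finset.sum_le_sum fun v _ => hterm v
        _ = (Fintype.card V : ℝ≥0∞) * M := by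
            rw [Finset.sum_const, nsmul_eq_mul, Finset.card_univ]
    have hU2 : P (⋃ (p : V × V) (_ : t < ((DA p.1 p.2).card : ℝ)),
        {ω : (V → Bool) × (V ≃ Fin (Fintype.card V)) | ∀ x ∈ DA p.1 p.2, ω.1 x = false}) ≤
        ((Fintype.card V * Fintype.card V - Fintype.card V : ℕ) : ℝ≥0∞) * M := by
      refine le_trans (measure_iUnion_le _) ?_
      rw [tsum_fintype]
      have hterm : ∀ p : V × V, P (⋃ (_ : t < ((DA p.1 p.2).card : ℝ)),
          {ω : (V → Bool) × (V ≃ Fin (Fintype.card V)) | ∀ x ∈ DA p.1 p.2, ω.1 x = false})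
          ≤ if p.1 ≠ p.2 then M else 0 := by
        intro p
        by_cases hcond : t < ((DA p.1 p.2).card : ℝ)
        · have hne : p.1 ≠ p.2 := by
            rintro heq
            have hempty : DA p.1 p.2 = ∅ := by
              rw [hDA, heq]
              rw [Finset.eq_empty_iff_forall_notMem]
              intro x hx
              simp only [Finset.mem_erase, Finset.mem_inter, mem_succSet, mem_predSet] at hx
              exact hx.1 (reach_antisymm adj hacyc hx.2.2 hx.2.1)
            rw [hempty] at hcond
            simp only [Finset.card_empty, Nat.cast_zero] at hcond
            linarith
          rw [if_pos hne]
          refine le_trans (measure_mono (Set.iUnion_subset fun _ => subset_rfl)) ?_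
          exact hMb _ hcond.le
        · rw [Set.iUnion_eq_empty.mpr fun h => absurd h hcond]
          simp
      calc ∑ p : V × V, P (⋃ (_ : t < ((DA p.1 p.2).card : ℝ)),
            {ω : (V → Bool) × (V ≃ Fin (Fintype.card V)) | ∀ x ∈ DA p.1 p.2, ω.1 x = false})
          ≤ ∑ p : V × V, if p.1 ≠ p.2 then M else 0 :=
            Finset.sum_le_sum fun p _ => hterm p
        _ = ((Finset.univ.filter fun p : V × V => p.1 ≠ p.2).card : ℝ≥0∞) * M := by
            rw [Finset.sum_ite, Finset.sum_const, Finset.sum_const_zero, add_zero,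
              nsmul_eq_mul]
        _ ≤ ((Fintype.card V * Fintype.card V - Fintype.card V : ℕ) : ℝ≥0∞) * M := by
            have heq : (Finset.univ.filter fun p : V × V => p.1 ≠ p.2) =
                (Finset.univ : Finset V).offDiag := by
              ext p
              simp [Finset.mem_offDiag]
            have hcard : (Finset.univ.filter fun p : V × V => p.1 ≠ p.2).card ≤
                Fintype.card V * Fintype.card V - Fintype.card V := by
              rw [heq, Finset.offDiag_card, Finset.card_univ]
            exact mul_le_mul_left (by exact_mod_cast hcard) M
    have htotal := le_trans (measure_mono hcover)
      (le_trans (measure_union_le _ _) (add_le_add hU1 hU2))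
    refine le_trans htotal ?_
    have hsum : (Fintype.card V : ℝ≥0∞) * M +
        ((Fintype.card V * Fintype.card V - Fintype.card V : ℕ) : ℝ≥0∞) * M =
        ((Fintype.card V * Fintype.card V : ℕ) : ℝ≥0∞) * M := by
      rw [← add_mul]
      congr 1
      rw [← Nat.cast_add]
      congr 1
      have : Fintype.card V ≤ Fintype.card V * Fintype.card V := Nat.le_mul_of_pos_left _ hn1
      omega
    rw [hsum]
    -- final real arithmetic
    have hn0 : (0 : ℝ) < (Fintype.card V : ℝ) := by exact_mod_cast hn1
    have hqt : qr * t = c * Real.log (Fintype.card V) := by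
      rw [htdef]
      field_simp
    have hexp : Real.exp (-(qr * t)) = (Fintype.card V : ℝ) ^ (-c) := by
      rw [hqt, Real.rpow_def_of_pos hn0]
      ring_nf
    have hfinal : ((Fintype.card V * Fintype.card V : ℕ) : ℝ) * Real.exp (-(qr * t)) =
        1 / (Fintype.card V : ℝ) ^ (c - 2) := by
      rw [hexp, Nat.cast_mul, one_div, ← Real.rpow_neg hn0.le, neg_sub,
        show (2:ℝ) - c = 1 + 1 + -c by ring, Real.rpow_add hn0, Real.rpow_add hn0,
        Real.rpow_one]
    rw [hM, ← ENNReal.ofReal_natCast, ← ENNReal.ofReal_mul (by positivity), hfinal]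
  -- conclude
  have h1 : P good = 1 - P goodᶜ := by
    have := prob_compl_eq_one_sub (μ := P) (hmeas goodᶜ)
    rw [compl_compl] at this
    rw [this]
  rw [h1]
  rw [ENNReal.ofReal_sub _ (by positivity), ENNReal.ofReal_one]
  exact tsub_le_tsub_left hbad 1
end
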